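/- Let A be an n×n symmetric positive semidefinite matrix and P an n×n orthogonal projection matrix (P = Pᵀ = P²). Then |trace((I + A)⁻¹) − trace((I + P A P)⁻¹)| ≤ trace(A − P A P). -/

import Mathlib

open Matrix

lemma psd_trace_nonneg {m : Type*} [Fintype m] [DecidableEq m] {S : Matrix m m ℝ}
    (hS : S.PosSemidef) : 0 ≤ S.trace := by
  rw [Matrix.trace]
  refine Finset.sum_nonneg fun i _ => ?_
  have := hS.dotProduct_mulVec_nonneg (Pi.single i 1)
  simpa [dotProduct, Matrix.mulVec, Pi.single_apply] using this

open scoped MatrixOrder in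
lemma psd_trace_mul_nonneg {m : Type*} [Fintype m] [DecidableEq m]
    {S T : Matrix m m ℝ} (hS : S.PosSemidef) (hT : T.PosSemidef) :
    0 ≤ (S * T).trace := by
  obtain ⟨R, hR⟩ := CStarAlgebra.nonneg_iff_eq_star_mul_self.mp hS.nonneg
  have h1 : S * T = Rᴴ * (R * T) := by
    rw [hR, Matrix.star_eq_conjTranspose, Matrix.mul_assoc]
  rw [h1, Matrix.trace_mul_comm]
  have h2 : (R * T * Rᴴ).PosSemidef := hT.mul_mul_conjTranspose_same R
  exact psd_trace_nonneg h2

lemma psd_conj {m : Type*} [Fintype m] {S C : Matrix m m ℝ} (hS : S.PosSemidef)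
    (hC : Cᵀ = C) : (C * S * C).PosSemidef := by
  have := hS.mul_mul_conjTranspose_same C
  rwa [Matrix.conjTranspose_eq_transpose_of_trivial, hC] at this

lemma psd_conj' {m : Type*} [Fintype m] {S : Matrix m m ℝ} (hS : S.PosSemidef)
    (C : Matrix m m ℝ) : (Cᵀ * S * C).PosSemidef := by
  have := hS.conjTranspose_mul_mul_same C
  rwa [Matrix.conjTranspose_eq_transpose_of_trivial] at this

theorem stmt_3 {n : ℕ} (A P : Matrix (Fin n) (Fin n) ℝ)
    (hA : A.PosSemidef) (hPsym : P.transpose = P) (hPproj : P * P = P) :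
    |((1 + A)⁻¹).trace - ((1 + P * A * P)⁻¹).trace| ≤ (A - P * A * P).trace := by
  set B : Matrix (Fin n) (Fin n) ℝ := P * A * P with hBdef
  set M : Matrix (Fin n) (Fin n) ℝ := 1 + A with hMdef
  set N : Matrix (Fin n) (Fin n) ℝ := 1 + B with hNdef
  set Q : Matrix (Fin n) (Fin n) ℝ := 1 - P with hQdef
  have hAsym : Aᵀ = A := by
    rw [← Matrix.conjTranspose_eq_transpose_of_trivial]; exact hA.1
  have hBps : B.PosSemidef := by
    have := hA.mul_mul_conjTranspose_same P
    rwa [Matrix.conjTranspose_eq_transpose_of_trivial, hPsym, ← hBdef] at this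
  have hMpd : M.PosDef := Matrix.PosDef.one.add_posSemidef hA
  have hNpd : N.PosDef := Matrix.PosDef.one.add_posSemidef hBps
  have hMdet : IsUnit M.det := (Matrix.isUnit_iff_isUnit_det M).mp hMpd.isUnit
  have hNdet : IsUnit N.det := (Matrix.isUnit_iff_isUnit_det N).mp hNpd.isUnit
  have hMiM : M⁻¹ * M = 1 := Matrix.nonsing_inv_mul M hMdet
  have hMMi : M * M⁻¹ = 1 := Matrix.mul_nonsing_inv M hMdet
  have hNiN : N⁻¹ * N = 1 := Matrix.nonsing_inv_mul N hNdet
  have hNNi : N * N⁻¹ = 1 := Matrix.mul_nonsing_inv N hNdet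
  have hBsym : Bᵀ = B := by
    rw [hBdef, Matrix.transpose_mul, Matrix.transpose_mul, hPsym, hAsym,
      ← Matrix.mul_assoc]
  have hMsym : Mᵀ = M := by rw [hMdef, Matrix.transpose_add, Matrix.transpose_one, hAsym]
  have hNsym : Nᵀ = N := by rw [hNdef, Matrix.transpose_add, Matrix.transpose_one, hBsym]
  have hMisym : M⁻¹ᵀ = M⁻¹ := by rw [Matrix.transpose_nonsing_inv, hMsym]
  have hNisym : N⁻¹ᵀ = N⁻¹ := by rw [Matrix.transpose_nonsing_inv, hNsym]
  have hQsym : Qᵀ = Q := by rw [hQdef, Matrix.transpose_sub, Matrix.transpose_one, hPsym]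
  have hPQ : P * Q = 0 := by rw [hQdef, mul_sub, mul_one, hPproj, sub_self]
  have hQP : Q * P = 0 := by rw [hQdef, sub_mul, one_mul, hPproj, sub_self]
  have hQQ : Q * Q = Q := by
    calc Q * Q = Q - P * Q := by rw [hQdef]; rw [sub_mul, one_mul]
    _ = Q := by rw [hPQ, sub_zero]
  have hBQ : B * Q = 0 := by rw [hBdef, mul_assoc, hPQ, mul_zero]
  have hQB : Q * B = 0 := by
    rw [hBdef, ← mul_assoc, ← mul_assoc, hQP, zero_mul, zero_mul]
  have hPB : P * B = B := by rw [hBdef, ← mul_assoc, ← mul_assoc, hPproj]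
  have hBP : B * P = B := by rw [hBdef, mul_assoc, hPproj]
  have hNQ : N * Q = Q := by rw [hNdef, add_mul, one_mul, hBQ, add_zero]
  have hQN : Q * N = Q := by rw [hNdef, mul_add, mul_one, hQB, add_zero]
  have hNiQ : N⁻¹ * Q = Q := by
    conv_lhs => rw [← hNQ, ← mul_assoc, hNiN, one_mul]
  have hQNi : Q * N⁻¹ = Q := by
    conv_lhs => rw [← hQN, mul_assoc, hNNi, mul_one]
  have hPN : P * N = N * P := by
    rw [hNdef, mul_add, mul_one, hPB, add_mul, one_mul, hBP]
  have hPNi : P * N⁻¹ = N⁻¹ * P := by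
    have h := congrArg (fun X => N⁻¹ * X * N⁻¹) hPN
    simp only [mul_assoc] at h
    rw [hNNi, mul_one, ← mul_assoc N⁻¹ N (P * N⁻¹), hNiN, one_mul] at h
    exact h.symm
  have hPMP : P * M * P = P + B := by
    rw [hMdef, mul_add, mul_one, add_mul, hPproj, hBdef, mul_assoc]
  -- trace of Q*A*Q equals trace of A - B
  have htrQ : (Q * A * Q).trace = (A - B).trace := by
    have h1 : (Q * A * Q).trace = (Q * A).trace := by
      rw [Matrix.trace_mul_comm, ← mul_assoc, hQQ]
    have h2 : B.trace = (P * A).trace := by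
      rw [hBdef, Matrix.trace_mul_comm, ← mul_assoc, hPproj]
    have h3 : (Q * A).trace = A.trace - (P * A).trace := by
      rw [hQdef, sub_mul, one_mul, Matrix.trace_sub]
    rw [Matrix.trace_sub, h1, h3, h2]
  -- Direction 1
  have key1 : N⁻¹.trace - M⁻¹.trace ≤ (Q * A * Q).trace := by
    have hC : ((N⁻¹ - M⁻¹) * M * (N⁻¹ - M⁻¹)).PosSemidef :=
      psd_conj hMpd.posSemidef (by rw [Matrix.transpose_sub, hNisym, hMisym])
    have e1 : (N⁻¹ - M⁻¹) * M * (N⁻¹ - M⁻¹)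
        = N⁻¹ * M * N⁻¹ - N⁻¹ - N⁻¹ + M⁻¹ := by
      rw [sub_mul, hMiM, sub_mul, one_mul, mul_sub, mul_assoc N⁻¹ M M⁻¹, hMMi,
        mul_one]
      abel
    have i1 : 0 ≤ (N⁻¹ * M * N⁻¹).trace - N⁻¹.trace - N⁻¹.trace + M⁻¹.trace := by
      have h0 := psd_trace_nonneg hC
      rw [e1] at h0
      simpa [Matrix.trace_add, Matrix.trace_sub] using h0
    have e2 : (N⁻¹ * M * N⁻¹).trace = N⁻¹.trace + (Q * A * Q).trace := by
      have hMN : M = N + (A - B) := by rw [hMdef, hNdef]; abel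
      have e3 : N⁻¹ * M * N⁻¹ = N⁻¹ + N⁻¹ * (A - B) * N⁻¹ := by
        rw [hMN, mul_add, add_mul, hNiN, one_mul]
      have hdecomp : A - B = Q * A * Q + Q * A * P + P * A * Q := by
        rw [hQdef, hBdef]; noncomm_ring
      have t1 : (N⁻¹ * (Q * A * Q) * N⁻¹).trace = (Q * A * Q).trace := by
        have h : N⁻¹ * (Q * A * Q) * N⁻¹ = Q * A * Q := by
          rw [mul_assoc N⁻¹ (Q * A * Q) N⁻¹, mul_assoc (Q * A) Q N⁻¹, hQNi,
            ← mul_assoc N⁻¹ (Q * A) Q, ← mul_assoc N⁻¹ Q A, hNiQ]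
        rw [h]
      have t2 : (N⁻¹ * (Q * A * P) * N⁻¹).trace = 0 := by
        have h : N⁻¹ * (Q * A * P) * N⁻¹ = Q * A * (N⁻¹ * P) := by
          rw [mul_assoc N⁻¹ (Q * A * P) N⁻¹, mul_assoc (Q * A) P N⁻¹, hPNi,
            ← mul_assoc N⁻¹ (Q * A) (N⁻¹ * P), ← mul_assoc N⁻¹ Q A, hNiQ]
        rw [h, Matrix.trace_mul_comm, mul_assoc N⁻¹ P (Q * A),
          ← mul_assoc P Q A, hPQ, zero_mul, mul_zero, Matrix.trace_zero]
      have t3 : (N⁻¹ * (P * A * Q) * N⁻¹).trace = 0 := by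
        have h : N⁻¹ * (P * A * Q) * N⁻¹ = (P * N⁻¹) * (A * Q) := by
          rw [mul_assoc N⁻¹ (P * A * Q) N⁻¹, mul_assoc (P * A) Q N⁻¹, hQNi,
            mul_assoc P A Q, ← mul_assoc N⁻¹ P (A * Q), ← hPNi]
        rw [h, mul_assoc P N⁻¹ (A * Q), Matrix.trace_mul_comm,
          mul_assoc N⁻¹ (A * Q) P, mul_assoc A Q P, hQP, mul_zero, mul_zero,
          Matrix.trace_zero]
      have e4 : N⁻¹ * (A - B) * N⁻¹
          = N⁻¹ * (Q * A * Q) * N⁻¹ + N⁻¹ * (Q * A * P) * N⁻¹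
            + N⁻¹ * (P * A * Q) * N⁻¹ := by
        rw [hdecomp, mul_add, mul_add, add_mul, add_mul]
      rw [e3, Matrix.trace_add, e4, Matrix.trace_add, Matrix.trace_add, t1, t2, t3]
      ring
    linarith [i1, e2]
  -- auxiliary rewrite rules (right-assoc forms)
  have hPN2 : P * N = P + B := by rw [hNdef, mul_add, mul_one, hPB]
  have r1 : ∀ X : Matrix (Fin n) (Fin n) ℝ, P * (N * X) = P * X + B * X := fun X => by
    rw [← mul_assoc, hPN2, add_mul]
  have r2 : ∀ X : Matrix (Fin n) (Fin n) ℝ, Q * (N * X) = Q * X := fun X => by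
    rw [← mul_assoc, hQN]
  have r3 : ∀ X : Matrix (Fin n) (Fin n) ℝ, N⁻¹ * (N * X) = X := fun X => by
    rw [← mul_assoc, hNiN, one_mul]
  have r4 : ∀ X : Matrix (Fin n) (Fin n) ℝ, P * (P * X) = P * X := fun X => by
    rw [← mul_assoc, hPproj]
  have r5 : ∀ X : Matrix (Fin n) (Fin n) ℝ, Q * (P * X) = 0 := fun X => by
    rw [← mul_assoc, hQP, zero_mul]
  have r6 : ∀ X : Matrix (Fin n) (Fin n) ℝ, P * (Q * X) = 0 := fun X => by
    rw [← mul_assoc, hPQ, zero_mul]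
  have r7 : ∀ X : Matrix (Fin n) (Fin n) ℝ, B * (P * X) = B * X := fun X => by
    rw [← mul_assoc, hBP]
  have r8 : ∀ X : Matrix (Fin n) (Fin n) ℝ, M⁻¹ * (M * X) = X := fun X => by
    rw [← mul_assoc, hMiM, one_mul]
  -- Direction 2
  have key2 : M⁻¹.trace - N⁻¹.trace ≤ (Q * A * Q).trace := by
    have hZt : (P * M⁻¹ + Q - N⁻¹)ᵀ = M⁻¹ * P + Q - N⁻¹ := by
      rw [Matrix.transpose_sub, Matrix.transpose_add, Matrix.transpose_mul, hMisym,
        hPsym, hQsym, hNisym]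
    have hD : ((M⁻¹ * P + Q - N⁻¹) * N * (P * M⁻¹ + Q - N⁻¹)).PosSemidef := by
      have := psd_conj' hNpd.posSemidef (P * M⁻¹ + Q - N⁻¹)
      rwa [hZt] at this
    have eexp : (M⁻¹ * P + Q - N⁻¹) * N * (P * M⁻¹ + Q - N⁻¹)
        = M⁻¹ * (P + B) * M⁻¹ - M⁻¹ * P - P * M⁻¹ - Q + N⁻¹ := by
      simp only [add_mul, mul_add, sub_mul, mul_sub, mul_assoc, r1, r2, r3, r4, r5,
        r6, r7, hNQ, hNNi, hQQ, hPQ, hQP, hPproj, hBP, hPB, hQNi, hNiQ, hQN, hNiN,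
        mul_one, one_mul, mul_zero, zero_mul, add_zero, zero_add, sub_zero]
      abel
    have i2 : 0 ≤ (M⁻¹ * (P + B) * M⁻¹).trace - (M⁻¹ * P).trace - (P * M⁻¹).trace
        - Q.trace + N⁻¹.trace := by
      have h0 := psd_trace_nonneg hD
      rw [eexp] at h0
      simpa [Matrix.trace_add, Matrix.trace_sub] using h0
    have htrMP : (M⁻¹ * P).trace = (P * M⁻¹).trace := Matrix.trace_mul_comm _ _
    have hQMQ : Q * M * Q = M - P * M - M * P + (P + B) := by
      rw [hQdef, sub_mul, one_mul, mul_sub, mul_one, sub_mul, hPMP]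
      abel
    have e5 : M⁻¹ * (Q * M * Q) * M⁻¹
        = M⁻¹ * (P + B) * M⁻¹ + M⁻¹ - M⁻¹ * P - P * M⁻¹ := by
      rw [hQMQ]
      simp only [add_mul, mul_add, sub_mul, mul_sub, mul_assoc, r8, hMMi, hMiM,
        mul_one, one_mul]
      abel
    have i3 : (M⁻¹ * (Q * M * Q) * M⁻¹).trace
        = (M⁻¹ * (P + B) * M⁻¹).trace + M⁻¹.trace - (M⁻¹ * P).trace
          - (P * M⁻¹).trace := by
      rw [e5, Matrix.trace_sub, Matrix.trace_sub, Matrix.trace_add]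
    have hS : (Q * M * Q).PosSemidef := psd_conj hMpd.posSemidef hQsym
    have hAA : (A * A + (A + A)).PosSemidef := by
      have h2 := hA.pow 2
      rw [pow_two] at h2
      exact h2.add (hA.add hA)
    have hT : (1 - M⁻¹ * M⁻¹).PosSemidef := by
      have hconj := psd_conj hAA hMisym
      have hEq : M⁻¹ * (A * A + (A + A)) * M⁻¹ = 1 - M⁻¹ * M⁻¹ := by
        have hMM : A * A + (A + A) = M * M - 1 := by rw [hMdef]; noncomm_ring
        rw [hMM, mul_sub, mul_one, sub_mul, ← mul_assoc M⁻¹ M M, hMiM, one_mul, hMMi]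
      rwa [hEq] at hconj
    have i4 : 0 ≤ ((Q * M * Q) * (1 - M⁻¹ * M⁻¹)).trace := psd_trace_mul_nonneg hS hT
    have e6 : ((Q * M * Q) * (1 - M⁻¹ * M⁻¹)).trace
        = (Q * M * Q).trace - (M⁻¹ * (Q * M * Q) * M⁻¹).trace := by
      have e6' : (M⁻¹ * (Q * M * Q) * M⁻¹).trace
          = ((Q * M * Q) * (M⁻¹ * M⁻¹)).trace := by
        rw [Matrix.trace_mul_comm, ← mul_assoc, Matrix.trace_mul_comm]
      rw [mul_sub, mul_one, Matrix.trace_sub, e6']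
    have e7 : (Q * M * Q).trace = Q.trace + (Q * A * Q).trace := by
      have h : Q * M * Q = Q * Q + Q * A * Q := by
        rw [hMdef, mul_add, mul_one, add_mul]
      rw [h, Matrix.trace_add, hQQ]
    linarith [i2, i3, i4, e6, e7, htrMP]
  rw [abs_sub_le_iff]
  constructor
  · linarith [key2, htrQ]
  · linarith [key1, htrQ]
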